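/- In the model structure on Flow with cofibration class cof(I^gl ∪ {C}) and weak equivalence class W̄_DK: a flow X is fibrant if and only if either PX = ∅ (X is a set) or for every pair of states (α,β) the space P_{α,β}X is nonempty and every continuous map S^{n-1} → P_{α,β}X (n ≥ 1) extends over D^n (i.e. the map P_{α,β}X → {∗} is a trivial q-fibration); in particular not all flows are fibrant. Moreover the cofibrant objects are exactly the q-cofibrant flows, i.e. the flows X for which ∅ → X belongs to cof(I^gl ∪ {C, R}). -/

import Mathlib

open CategoryTheory

noncomputable section

/-! ### Flows: small semicategories enriched in topological spaces -/

structure DFlow : Type 1 where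
  States : Type
  Path : States → States → Type
  str : ∀ α β, TopologicalSpace (Path α β)
  comp : ∀ {α β γ : States}, Path α β → Path β γ → Path α γ
  continuous_comp : ∀ α β γ, Continuous (fun p : Path α β × Path β γ => comp p.1 p.2)
  assoc : ∀ {α β γ δ : States} (x : Path α β) (y : Path β γ) (z : Path γ δ),
    comp (comp x y) z = comp x (comp y z)

attribute [instance] DFlow.str

/-- Morphisms of flows. -/
structure FlowHom (X Y : DFlow) where
  toFun : X.States → Y.States
  map : ∀ {α β : X.States}, X.Path α β → Y.Path (toFun α) (toFun β)
  continuous_map : ∀ α β : X.States, Continuous fun p : X.Path α β => map p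
  map_comp : ∀ {α β γ : X.States} (x : X.Path α β) (y : X.Path β γ),
    map (X.comp x y) = Y.comp (map x) (map y)

instance : Category DFlow where
  Hom := FlowHom
  id X := ⟨id, fun p => p, fun _ _ => continuous_id, fun _ _ => rfl⟩
  comp f g := ⟨g.toFun ∘ f.toFun, fun p => g.map (f.map p),
    fun α β => (g.continuous_map _ _).comp (f.continuous_map _ _),
    fun x y => by simp only [f.map_comp, g.map_comp]⟩

lemma continuous_of_isEmpty {X Y : Type} [TopologicalSpace X] [TopologicalSpace Y]
    (h : IsEmpty X) (f : X → Y) : Continuous f :=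
  continuous_iff_continuousAt.mpr fun x => h.elim x

/-- A set viewed as a flow with empty spaces of execution paths. -/
def DFlow.ofSet (S : Type) : DFlow where
  States := S
  Path _ _ := Empty
  str _ _ := ⊥
  comp x _ := x.elim
  continuous_comp _ _ _ := continuous_of_isEmpty (inferInstanceAs (IsEmpty (Empty × Empty))) _
  assoc x _ _ := x.elim

/-- The empty flow. -/
def emptyFlow : DFlow := DFlow.ofSet Empty

/-- The flow `{0}` with one state and no execution path. -/
def pointFlow : DFlow := DFlow.ofSet PUnit

/-- The flow `{0, 1}` with two states and no execution path. -/
def twoFlow : DFlow := DFlow.ofSet Bool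

/-- The terminal flow. -/
def terminalFlow : DFlow where
  States := PUnit
  Path _ _ := PUnit
  str _ _ := ⊥
  comp _ _ := PUnit.unit
  continuous_comp _ _ _ := continuous_const
  assoc _ _ _ := rfl

/-- The map of flows `C : ∅ → {0}`. -/
def Cmap : emptyFlow ⟶ pointFlow :=
  ⟨fun x => x.elim, fun {α} _ _ => α.elim, fun α _ => α.elim, fun {α} _ _ _ _ => α.elim⟩

/-- The map of flows `R : {0,1} → {0}`. -/
def Rmap : twoFlow ⟶ pointFlow :=
  ⟨fun _ => PUnit.unit, fun p => p.elim, fun _ _ => @continuous_of_isEmpty _ _ (DFlow.str _ _ _) (DFlow.str _ _ _) (inferInstanceAs (IsEmpty Empty)) _, fun x _ => x.elim⟩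

/-- The map of flows `C⁺ : {0} → {0,1}`. -/
def Cplus : pointFlow ⟶ twoFlow :=
  ⟨fun _ => false, fun p => p.elim, fun _ _ => @continuous_of_isEmpty _ _ (DFlow.str _ _ _) (DFlow.str _ _ _) (inferInstanceAs (IsEmpty Empty)) _, fun x _ => x.elim⟩

/-- The canonical map from the empty flow. -/
def DFlow.fromEmpty (X : DFlow) : emptyFlow ⟶ X :=
  ⟨fun x => x.elim, fun {α} _ => α.elim, fun α _ => α.elim, fun {α} _ _ _ _ => α.elim⟩

/-- The canonical map to the terminal flow. -/
def DFlow.toTerminal (X : DFlow) : X ⟶ terminalFlow :=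
  ⟨fun _ => PUnit.unit, fun _ => PUnit.unit, fun _ _ => @continuous_const _ _ (X.str _ _) (terminalFlow.str _ _) PUnit.unit, fun _ _ => rfl⟩

/-! ### Globes -/

/-- The path spaces of the globe `Glob(Z)`. -/
def GlobPath (Z : Type) : Bool → Bool → Type
  | false, true => Z
  | _, _ => Empty

instance globPathTop (Z : Type) [TopologicalSpace Z] :
    ∀ a b, TopologicalSpace (GlobPath Z a b)
  | false, true => inferInstanceAs (TopologicalSpace Z)
  | false, false => ⊥
  | true, false => ⊥
  | true, true => ⊥

instance globPathIsEmpty (Z : Type) : ∀ (a : Bool), IsEmpty (GlobPath Z a a)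
  | false => inferInstanceAs (IsEmpty Empty)
  | true => inferInstanceAs (IsEmpty Empty)

/-- The globe of a topological space. -/
def DFlow.glob (Z : Type) [TopologicalSpace Z] : DFlow where
  States := Bool
  Path := GlobPath Z
  str := globPathTop Z
  comp {a b c} x y :=
    match a, b, c, x, y with
    | false, false, _, x, _ => x.elim
    | false, true, false, _, y => y.elim
    | false, true, true, _, y => y.elim
    | true, false, _, x, _ => x.elim
    | true, true, _, x, _ => x.elim
  continuous_comp a b c :=
    match a, b, c with
    | false, false, false => continuous_of_isEmpty ⟨fun p => p.1.elim⟩ _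
    | false, false, true => continuous_of_isEmpty ⟨fun p => p.1.elim⟩ _
    | false, true, false => continuous_of_isEmpty ⟨fun p => p.2.elim⟩ _
    | false, true, true => continuous_of_isEmpty ⟨fun p => p.2.elim⟩ _
    | true, false, false => continuous_of_isEmpty ⟨fun p => p.1.elim⟩ _
    | true, false, true => continuous_of_isEmpty ⟨fun p => p.1.elim⟩ _
    | true, true, false => continuous_of_isEmpty ⟨fun p => p.1.elim⟩ _
    | true, true, true => continuous_of_isEmpty ⟨fun p => p.1.elim⟩ _
  assoc {a b c d} x y z :=
    match a, b, c, d, x, y, z with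
    | false, false, _, _, x, _, _ => x.elim
    | false, true, false, _, _, y, _ => y.elim
    | false, true, true, false, _, y, _ => y.elim
    | false, true, true, true, _, y, _ => y.elim
    | true, _, _, _, x, _, _ => x.elim

/-- The functorial action of `Glob` on a continuous map. -/
def DFlow.globMap {Z W : Type} [TopologicalSpace Z] [TopologicalSpace W] (f : Z → W)
    (hf : Continuous f) : DFlow.glob Z ⟶ DFlow.glob W where
  toFun := id
  map {a b} x :=
    match a, b, x with
    | false, true, x => f x
    | false, false, x => x.elim
    | true, false, x => x.elim
    | true, true, x => x.elim
  continuous_map a b :=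
    match a, b with
    | false, true => hf
    | false, false => @continuous_of_isEmpty _ _ (DFlow.str _ _ _) (DFlow.str _ _ _) (inferInstanceAs (IsEmpty Empty)) _
    | true, false => @continuous_of_isEmpty _ _ (DFlow.str _ _ _) (DFlow.str _ _ _) (inferInstanceAs (IsEmpty Empty)) _
    | true, true => @continuous_of_isEmpty _ _ (DFlow.str _ _ _) (DFlow.str _ _ _) (inferInstanceAs (IsEmpty Empty)) _
  map_comp {a b c} x y :=
    match a, b, c, x, y with
    | false, false, _, x, _ => x.elim
    | false, true, false, _, y => y.elim
    | false, true, true, _, y => y.elim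
    | true, _, _, x, _ => x.elim

/-- The directed segment, the globe of a one-point space. -/
def Iseg : DFlow := DFlow.glob PUnit

/-! ### Disks and spheres -/

/-- The `n`-dimensional disk `D^n`. -/
def gDisk (n : ℕ) : Type := (Metric.closedBall (0 : EuclideanSpace ℝ (Fin n)) 1 : Set _)

/-- The sphere `S^{n-1}`, boundary of the `n`-dimensional disk. -/
def gSphere (n : ℕ) : Type := (Metric.sphere (0 : EuclideanSpace ℝ (Fin n)) 1 : Set _)

instance (n : ℕ) : TopologicalSpace (gDisk n) :=
  inferInstanceAs (TopologicalSpace (Metric.closedBall (0 : EuclideanSpace ℝ (Fin n)) 1))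

instance (n : ℕ) : TopologicalSpace (gSphere n) :=
  inferInstanceAs (TopologicalSpace (Metric.sphere (0 : EuclideanSpace ℝ (Fin n)) 1))

/-- The inclusion `S^{n-1} ⊆ D^n`. -/
def sphereIncl (n : ℕ) : gSphere n → gDisk n :=
  fun x => ⟨x.1, Metric.sphere_subset_closedBall x.2⟩

lemma continuous_sphereIncl (n : ℕ) : Continuous (sphereIncl n) :=
  Continuous.subtype_mk continuous_subtype_val _

/-- The generating cofibration `c_n : Glob(S^{n-1}) → Glob(D^n)`. -/
def cFlow (n : ℕ) : DFlow.glob (gSphere n) ⟶ DFlow.glob (gDisk n) :=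
  DFlow.globMap (sphereIncl n) (continuous_sphereIncl n)

/-- `{0}` as a subspace of `ℝ`. -/
def zeroSpace : Type := ({(0 : ℝ)} : Set ℝ)

instance : TopologicalSpace zeroSpace := inferInstanceAs (TopologicalSpace ({(0:ℝ)} : Set ℝ))

/-- The inclusion `D^n × {0} → D^n × [0,1]`. -/
def cylIncl (n : ℕ) : gDisk n × zeroSpace → gDisk n × unitInterval :=
  fun p => (p.1, ⟨p.2.1, by
    rcases p.2 with ⟨x, hx⟩
    simp only [Set.mem_singleton_iff] at hx
    subst hx
    exact unitInterval.zero_mem⟩)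

lemma continuous_cylIncl (n : ℕ) : Continuous (cylIncl n) :=
  continuous_fst.prodMk (Continuous.subtype_mk (continuous_subtype_val.comp continuous_snd) _)

/-- The generating trivial cofibration `Glob(D^n × {0}) → Glob(D^n × [0,1])`. -/
def jFlow (n : ℕ) : DFlow.glob (gDisk n × zeroSpace) ⟶ DFlow.glob (gDisk n × unitInterval) :=
  DFlow.globMap (cylIncl n) (continuous_cylIncl n)

/-! ### Generating sets of maps, as morphism properties -/

/-- The set `I^gl = {c_n : Glob(S^{n-1}) → Glob(D^n) | n ≥ 0}`. -/
def Igl : MorphismProperty DFlow := fun X Y f =>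
  ∃ n : ℕ, X = DFlow.glob (gSphere n) ∧ Y = DFlow.glob (gDisk n) ∧ HEq f (cFlow n)

/-- The set `I^gl_{≥1} = {c_n | n ≥ 1}`. -/
def IglGeOne : MorphismProperty DFlow := fun X Y f =>
  ∃ n : ℕ, 1 ≤ n ∧ X = DFlow.glob (gSphere n) ∧ Y = DFlow.glob (gDisk n) ∧ HEq f (cFlow n)

/-- The set `J^gl`. -/
def Jgl : MorphismProperty DFlow := fun X Y f =>
  ∃ n : ℕ, X = DFlow.glob (gDisk n × zeroSpace) ∧ Y = DFlow.glob (gDisk n × unitInterval) ∧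
    HEq f (jFlow n)

/-- The singleton `{C}`. -/
def Cprop : MorphismProperty DFlow := fun X Y f =>
  X = emptyFlow ∧ Y = pointFlow ∧ HEq f Cmap

/-- The singleton `{R}`. -/
def Rprop : MorphismProperty DFlow := fun X Y f =>
  X = twoFlow ∧ Y = pointFlow ∧ HEq f Rmap

/-- The set `I^gl ∪ {C}`. -/
def IglC : MorphismProperty DFlow := fun _ _ f => Igl f ∨ Cprop f

/-- The set `I^gl ∪ {C, R}`, generating cofibrations of the q-model structure. -/
def IglCR : MorphismProperty DFlow := fun _ _ f => Igl f ∨ Cprop f ∨ Rprop f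

/-! ### Lifting properties, cofibration and injectivity classes -/

/-- `rlpClass S` is `inj(S)`: maps with the RLP with respect to every map of `S`. -/
def rlpClass {M : Type _} [Category M] (S : MorphismProperty M) : MorphismProperty M :=
  fun _ _ p => ∀ {A B : M} (i : A ⟶ B), S i → HasLiftingProperty i p

/-- `llpClass S`: maps with the LLP with respect to every map of `S`. -/
def llpClass {M : Type _} [Category M] (S : MorphismProperty M) : MorphismProperty M :=
  fun _ _ i => ∀ {A B : M} (p : A ⟶ B), S p → HasLiftingProperty i p

/-- `cofClass S` is `cof(S) = llp(inj(S))`. -/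
def cofClass {M : Type _} [Category M] (S : MorphismProperty M) : MorphismProperty M :=
  llpClass (rlpClass S)

/-! ### Model structures -/

/-- A model structure on a category, specified by its weak equivalences,
cofibrations and fibrations. -/
structure ModelStructure (M : Type _) [Category M] where
  W : MorphismProperty M
  C : MorphismProperty M
  F : MorphismProperty M
  w_comp : ∀ {X Y Z : M} (f : X ⟶ Y) (g : Y ⟶ Z), W f → W g → W (f ≫ g)
  w_cancel_left : ∀ {X Y Z : M} (f : X ⟶ Y) (g : Y ⟶ Z), W f → W (f ≫ g) → W g
  w_cancel_right : ∀ {X Y Z : M} (f : X ⟶ Y) (g : Y ⟶ Z), W g → W (f ≫ g) → W f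
  w_retract : ∀ {X Y X' Y' : M} (f : X ⟶ Y) (g : X' ⟶ Y') (iX : X ⟶ X') (rX : X' ⟶ X)
    (iY : Y ⟶ Y') (rY : Y' ⟶ Y), iX ≫ rX = 𝟙 X → iY ≫ rY = 𝟙 Y →
    iX ≫ g = f ≫ iY → g ≫ rY = rX ≫ f → W g → W f
  cof_eq : C = llpClass (fun _ _ p => F p ∧ W p)
  fib_eq : F = rlpClass (fun _ _ i => C i ∧ W i)
  factor_triv_cof : ∀ {X Y : M} (f : X ⟶ Y),
    ∃ (Z : M) (i : X ⟶ Z) (p : Z ⟶ Y), C i ∧ W i ∧ F p ∧ i ≫ p = f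
  factor_triv_fib : ∀ {X Y : M} (f : X ⟶ Y),
    ∃ (Z : M) (i : X ⟶ Z) (p : Z ⟶ Y), C i ∧ F p ∧ W p ∧ i ≫ p = f

/-! ### The class of weak equivalences `W̄_DK` -/

/-- A flow "is a set": it has no execution path. -/
def DFlow.IsSetFlow (X : DFlow) : Prop := ∀ α β : X.States, IsEmpty (X.Path α β)

/-- A flow has at least one execution path. -/
def DFlow.HasExecPath (X : DFlow) : Prop := ∃ α β : X.States, Nonempty (X.Path α β)

/-- The class `W̄_DK` of maps of flows. -/
def WbarDK : MorphismProperty DFlow := fun X Y _ =>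
  (IsEmpty X.States ∧ IsEmpty Y.States) ∨
  (Nonempty X.States ∧ Nonempty Y.States ∧ X.IsSetFlow ∧ Y.IsSetFlow) ∨
  (X.HasExecPath ∧ Y.HasExecPath)

/-! ### Binary coproducts of flows -/

/-- Path spaces of the coproduct of two flows. -/
def SumPath (X Y : DFlow) : X.States ⊕ Y.States → X.States ⊕ Y.States → Type
  | .inl a, .inl b => X.Path a b
  | .inr a, .inr b => Y.Path a b
  | _, _ => Empty

instance sumPathTop (X Y : DFlow) : ∀ a b, TopologicalSpace (SumPath X Y a b)
  | .inl a, .inl b => inferInstanceAs (TopologicalSpace (X.Path a b))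
  | .inr a, .inr b => inferInstanceAs (TopologicalSpace (Y.Path a b))
  | .inl _, .inr _ => ⊥
  | .inr _, .inl _ => ⊥

/-- The coproduct of two flows. -/
def DFlow.sum (X Y : DFlow) : DFlow where
  States := X.States ⊕ Y.States
  Path := SumPath X Y
  str := sumPathTop X Y
  comp {a b c} x y :=
    match a, b, c, x, y with
    | .inl _, .inl _, .inl _, x, y => X.comp x y
    | .inr _, .inr _, .inr _, x, y => Y.comp x y
    | .inl _, .inl _, .inr _, _, y => y.elim
    | .inl _, .inr _, _, x, _ => x.elim
    | .inr _, .inl _, _, x, _ => x.elim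
    | .inr _, .inr _, .inl _, _, y => y.elim
  continuous_comp a b c :=
    match a, b, c with
    | .inl _, .inl _, .inl _ => X.continuous_comp _ _ _
    | .inr _, .inr _, .inr _ => Y.continuous_comp _ _ _
    | .inl _, .inl _, .inr _ => continuous_of_isEmpty ⟨fun p => p.2.elim⟩ _
    | .inl _, .inr _, _ => continuous_of_isEmpty ⟨fun p => p.1.elim⟩ _
    | .inr _, .inl _, _ => continuous_of_isEmpty ⟨fun p => p.1.elim⟩ _
    | .inr _, .inr _, .inl _ => continuous_of_isEmpty ⟨fun p => p.2.elim⟩ _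
  assoc {a b c d} x y z :=
    match a, b, c, d, x, y, z with
    | .inl _, .inl _, .inl _, .inl _, x, y, z => X.assoc x y z
    | .inr _, .inr _, .inr _, .inr _, x, y, z => Y.assoc x y z
    | .inl _, .inl _, .inl _, .inr _, _, _, z => z.elim
    | .inl _, .inl _, .inr _, _, _, y, _ => y.elim
    | .inl _, .inr _, _, _, x, _, _ => x.elim
    | .inr _, .inl _, _, _, x, _, _ => x.elim
    | .inr _, .inr _, .inl _, _, _, y, _ => y.elim
    | .inr _, .inr _, .inr _, .inl _, _, _, z => z.elim

/-- The coproduct of two maps of flows. -/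
def DFlow.sumMap {X X' Y Y' : DFlow} (f : X ⟶ X') (g : Y ⟶ Y') : X.sum Y ⟶ X'.sum Y' where
  toFun := Sum.map f.toFun g.toFun
  map {a b} x :=
    match a, b, x with
    | .inl _, .inl _, x => f.map x
    | .inr _, .inr _, x => g.map x
    | .inl _, .inr _, x => x.elim
    | .inr _, .inl _, x => x.elim
  continuous_map a b :=
    match a, b with
    | .inl _, .inl _ => f.continuous_map _ _
    | .inr _, .inr _ => g.continuous_map _ _
    | .inl _, .inr _ => @continuous_of_isEmpty _ _ (DFlow.str _ _ _) (DFlow.str _ _ _) (inferInstanceAs (IsEmpty Empty)) _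
    | .inr _, .inl _ => @continuous_of_isEmpty _ _ (DFlow.str _ _ _) (DFlow.str _ _ _) (inferInstanceAs (IsEmpty Empty)) _
  map_comp {a b c} x y :=
    match a, b, c, x, y with
    | .inl _, .inl _, .inl _, x, y => f.map_comp x y
    | .inr _, .inr _, .inr _, x, y => g.map_comp x y
    | .inl _, .inl _, .inr _, _, y => y.elim
    | .inl _, .inr _, _, x, _ => x.elim
    | .inr _, .inl _, _, x, _ => x.elim
    | .inr _, .inr _, .inl _, _, y => y.elim

/-- The map `c₀⁺ = id_{I⃗} ⊔ c₀ : I⃗ ⊔ Glob(S^{-1}) → I⃗ ⊔ Glob(D⁰)`. -/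
def cZeroPlus : Iseg.sum (DFlow.glob (gSphere 0)) ⟶ Iseg.sum (DFlow.glob (gDisk 0)) :=
  DFlow.sumMap (𝟙 Iseg) (cFlow 0)

/-- The singleton `{C⁺}`. -/
def CplusProp : MorphismProperty DFlow := fun X Y f =>
  X = pointFlow ∧ Y = twoFlow ∧ HEq f Cplus

/-- The singleton `{c₀⁺}`. -/
def cZeroPlusProp : MorphismProperty DFlow := fun X Y f =>
  X = Iseg.sum (DFlow.glob (gSphere 0)) ∧ Y = Iseg.sum (DFlow.glob (gDisk 0)) ∧ HEq f cZeroPlus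

/-- The set `{C⁺, c₀⁺} ∪ J^gl ∪ I^gl_{≥1}`. -/
def TrivCofGen : MorphismProperty DFlow := fun _ _ f =>
  CplusProp f ∨ cZeroPlusProp f ∨ Jgl f ∨ IglGeOne f

/-- A topological space is "trivially fibrant over the point": it is nonempty and
every continuous map `S^{n-1} → P` (`n ≥ 1`) extends over `D^n`. -/
def TrivFibOverPoint (P : Type) [TopologicalSpace P] : Prop :=
  Nonempty P ∧
    ∀ n : ℕ, 1 ≤ n → ∀ g : C(gSphere n, P),
      ∃ G : C(gDisk n, P), ∀ z : gSphere n, G (sphereIncl n z) = g z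

/-! ### Infrastructure -/

theorem FlowHom.hext {X Y : DFlow} {f g : X ⟶ Y} (h1 : f.toFun = g.toFun)
    (h2 : ∀ (α β : X.States) (p : X.Path α β), HEq (f.map p) (g.map p)) : f = g := by
  obtain ⟨f1, f2, f3, f4⟩ := f
  obtain ⟨g1, g2, g3, g4⟩ := g
  dsimp at h1
  subst h1
  have : @f2 = @g2 := by
    funext α β p
    exact eq_of_heq (h2 α β p)
  subst this
  rfl

theorem FlowHom.heq_map {X Y : DFlow} {f g : X ⟶ Y} (h : f = g) {α β : X.States}
    (p : X.Path α β) : HEq (f.map p) (g.map p) :=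
  congr_arg_heq (fun f : X ⟶ Y => f.map p) h

theorem FlowHom.toFun_eq {X Y : DFlow} {f g : X ⟶ Y} (h : f = g) :
    f.toFun = g.toFun := by cases h; rfl

/-- Homs out of a set flow are determined by their state functions. -/
theorem FlowHom.ext_of_setFlow {X Y : DFlow} (hX : X.IsSetFlow) {f g : X ⟶ Y}
    (h1 : f.toFun = g.toFun) : f = g :=
  FlowHom.hext h1 (fun α β p => ((hX α β).elim p))

instance subsingleton_hom_to_terminal (X : DFlow) : Subsingleton (X ⟶ terminalFlow) := by
  constructor
  intro f g
  refine FlowHom.hext (funext fun a => rfl) (fun α β p => heq_of_eq rfl)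

theorem subsingleton_hom_of_empty_states {X Y : DFlow} (hX : IsEmpty X.States)
    (f g : X ⟶ Y) : f = g :=
  FlowHom.hext (funext fun a => hX.elim a) (fun α _ _ => (hX.false α).elim)

@[simp] theorem FlowHom.comp_toFun {X Y Z : DFlow} (f : X ⟶ Y) (g : Y ⟶ Z) :
    (f ≫ g).toFun = g.toFun ∘ f.toFun := rfl

@[simp] theorem FlowHom.comp_map {X Y Z : DFlow} (f : X ⟶ Y) (g : Y ⟶ Z)
    {α β : X.States} (p : X.Path α β) : (f ≫ g).map p = g.map (f.map p) := rfl

theorem continuous_path_cast (E : DFlow) {a b a' b' : E.States} (h : a = a') (h' : b = b') :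
    Continuous (fun x : E.Path a b => cast (by rw [h, h']) x : E.Path a b → E.Path a' b') := by
  subst h; subst h'; exact continuous_id

theorem heq_comp_congr (D : DFlow) {a b c a' b' c' : D.States}
    (h1 : a = a') (h2 : b = b') (h3 : c = c')
    {u : D.Path a b} {v : D.Path b c} {u' : D.Path a' b'} {v' : D.Path b' c'}
    (hu : HEq u u') (hv : HEq v v') : HEq (D.comp u v) (D.comp u' v') := by
  subst h1; subst h2; subst h3
  rw [eq_of_heq hu, eq_of_heq hv]

theorem heq_fmap_congr {E D : DFlow} (p : E ⟶ D) {a b a' b' : E.States}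
    (h1 : a = a') (h2 : b = b') {x : E.Path a b} {x' : E.Path a' b'}
    (hx : HEq x x') : HEq (p.map x) (p.map x') := by
  subst h1; subst h2; rw [eq_of_heq hx]

/-! ### Constructors for homs out of globes and sums -/

/-- A hom `Glob Z ⟶ X` from two states and a continuous map into a path space. -/
def globHomMk {Z : Type} [TopologicalSpace Z] {X : DFlow} (α β : X.States)
    (g : Z → X.Path α β) (hg : Continuous g) : DFlow.glob Z ⟶ X where
  toFun := fun b => match b with | false => α | true => β
  map {a b} x :=
    match a, b, x with
    | false, true, x => g x
    | false, false, x => x.elim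
    | true, false, x => x.elim
    | true, true, x => x.elim
  continuous_map a b :=
    match a, b with
    | false, true => hg
    | false, false => @continuous_of_isEmpty _ _ (DFlow.str _ _ _) (DFlow.str _ _ _) (inferInstanceAs (IsEmpty Empty)) _
    | true, false => @continuous_of_isEmpty _ _ (DFlow.str _ _ _) (DFlow.str _ _ _) (inferInstanceAs (IsEmpty Empty)) _
    | true, true => @continuous_of_isEmpty _ _ (DFlow.str _ _ _) (DFlow.str _ _ _) (inferInstanceAs (IsEmpty Empty)) _
  map_comp {a b c} x y :=
    match a, b, c, x, y with
    | false, false, _, x, _ => x.elim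
    | false, true, false, _, y => y.elim
    | false, true, true, _, y => y.elim
    | true, _, _, x, _ => x.elim

@[simp] lemma globHomMk_toFun_false {Z : Type} [TopologicalSpace Z] {X : DFlow}
    (α β : X.States) (g : Z → X.Path α β) (hg : Continuous g) :
    (globHomMk α β g hg).toFun false = α := rfl

@[simp] lemma globHomMk_toFun_true {Z : Type} [TopologicalSpace Z] {X : DFlow}
    (α β : X.States) (g : Z → X.Path α β) (hg : Continuous g) :
    (globHomMk α β g hg).toFun true = β := rfl

@[simp] lemma globHomMk_map {Z : Type} [TopologicalSpace Z] {X : DFlow}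
    (α β : X.States) (g : Z → X.Path α β) (hg : Continuous g) (z : Z) :
    (globHomMk α β g hg).map (show (DFlow.glob Z).Path false true from z) = g z := rfl

/-- `Glob` of an empty space is a set flow. -/
lemma glob_isSetFlow {Z : Type} [TopologicalSpace Z] (hZ : IsEmpty Z) :
    (DFlow.glob Z).IsSetFlow := by
  intro a b
  match a, b with
  | false, true => exact hZ
  | false, false => exact inferInstanceAs (IsEmpty Empty)
  | true, false => exact inferInstanceAs (IsEmpty Empty)
  | true, true => exact inferInstanceAs (IsEmpty Empty)

/-- Combine homs on summands into a hom from a sum flow. -/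
def sumHomMk {A B X : DFlow} (f : A ⟶ X) (g : B ⟶ X) : A.sum B ⟶ X where
  toFun := Sum.elim f.toFun g.toFun
  map {a b} x :=
    match a, b, x with
    | .inl _, .inl _, x => f.map x
    | .inr _, .inr _, x => g.map x
    | .inl _, .inr _, x => x.elim
    | .inr _, .inl _, x => x.elim
  continuous_map a b :=
    match a, b with
    | .inl _, .inl _ => f.continuous_map _ _
    | .inr _, .inr _ => g.continuous_map _ _
    | .inl _, .inr _ => @continuous_of_isEmpty _ _ (DFlow.str _ _ _) (DFlow.str _ _ _) (inferInstanceAs (IsEmpty Empty)) _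
    | .inr _, .inl _ => @continuous_of_isEmpty _ _ (DFlow.str _ _ _) (DFlow.str _ _ _) (inferInstanceAs (IsEmpty Empty)) _
  map_comp {a b c} x y :=
    match a, b, c, x, y with
    | .inl _, .inl _, .inl _, x, y => f.map_comp x y
    | .inr _, .inr _, .inr _, x, y => g.map_comp x y
    | .inl _, .inl _, .inr _, _, y => y.elim
    | .inl _, .inr _, _, x, _ => x.elim
    | .inr _, .inl _, _, x, _ => x.elim
    | .inr _, .inr _, .inl _, _, y => y.elim

/-- The inclusion of the right summand. -/
def sumInr (A B : DFlow) : B ⟶ A.sum B where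
  toFun := .inr
  map {a b} x := x
  continuous_map a b := continuous_id
  map_comp x y := rfl

/-- The codiscrete flow on a type: all path spaces are singletons. -/
def codisc (S : Type) : DFlow where
  States := S
  Path _ _ := PUnit
  str _ _ := ⊥
  comp _ _ := PUnit.unit
  continuous_comp _ _ _ := continuous_const
  assoc _ _ _ := rfl

/-! ### Spheres and disks -/

instance gSphere_zero_isEmpty : IsEmpty (gSphere 0) := by
  constructor
  rintro ⟨z, hz⟩
  have : z = 0 := Subsingleton.elim z 0
  subst this
  simp at hz

lemma gDisk_nonempty (n : ℕ) : Nonempty (gDisk n) :=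
  ⟨⟨0, by simp⟩⟩

lemma gSphere_nonempty {n : ℕ} (hn : 1 ≤ n) : Nonempty (gSphere n) := by
  haveI : Nonempty (Fin n) := ⟨⟨0, hn⟩⟩
  haveI : Nontrivial (EuclideanSpace ℝ (Fin n)) := by
    refine ⟨EuclideanSpace.single (Classical.arbitrary (Fin n)) (1:ℝ), 0, ?_⟩
    intro h
    have := congrArg (fun v : EuclideanSpace ℝ (Fin n) => v (Classical.arbitrary (Fin n))) h
    simp [EuclideanSpace.single] at this
  have h := NormedSpace.sphere_nonempty (x := (0 : EuclideanSpace ℝ (Fin n))) (r := 1)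
  obtain ⟨z, hz⟩ := h.mpr (by norm_num)
  exact ⟨⟨z, hz⟩⟩

/-! ### Basic facts about lifting classes -/

lemma mem_cofClass_of_mem {M : Type _} [Category M] {S : MorphismProperty M}
    {A B : M} {f : A ⟶ B} (hf : S f) : cofClass S f :=
  fun p hp => hp f hf

lemma cofClass_mono {M : Type _} [Category M] {S T : MorphismProperty M}
    (hST : ∀ {A B : M} (f : A ⟶ B), S f → T f) {A B : M} {f : A ⟶ B}
    (hf : cofClass S f) : cofClass T f :=
  fun p hp => hf p (fun i hi => hp i (hST i hi))

/-- A map in `rlp(IglC)` is surjective on states. -/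
lemma surj_states_of_rlp {E D : DFlow} {p : E ⟶ D} (hp : rlpClass IglC p) (d : D.States) :
    ∃ e : E.States, p.toFun e = d := by
  have hlift : HasLiftingProperty Cmap p := hp Cmap (Or.inr ⟨rfl, rfl, HEq.rfl⟩)
  -- bottom map pointFlow ⟶ D picking `d`
  let v : pointFlow ⟶ D :=
    ⟨fun _ => d, fun q => q.elim, fun _ _ => @continuous_of_isEmpty _ _ (DFlow.str _ _ _) (DFlow.str _ _ _) (inferInstanceAs (IsEmpty Empty)) _,
      fun x _ => x.elim⟩
  have sq : CommSq (emptyFlow.fromEmpty ≫ (𝟙 emptyFlow) ≫ E.fromEmpty) Cmap p v := by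
    constructor
    exact subsingleton_hom_of_empty_states (inferInstanceAs (IsEmpty Empty)) _ _
  obtain ⟨⟨l⟩⟩ := hlift.sq_hasLift sq
  refine ⟨l.l.toFun PUnit.unit, ?_⟩
  have := congrFun (FlowHom.toFun_eq l.fac_right) PUnit.unit
  exact this

/-- The codiscrete flow on a nonempty type is fibrant in the strong sense:
its map to the terminal flow is in `rlp(IglC)`. -/
lemma codisc_toTerminal_rlp {S : Type} (hS : Nonempty S) :
    rlpClass IglC (codisc S).toTerminal := by
  intro A B i hi
  rcases hi with ⟨n, hA, hB, hf⟩ | ⟨hA, hB, hf⟩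
  · subst hA; subst hB
    have hf' : i = cFlow n := eq_of_heq hf
    subst hf'
    constructor
    intro u v sq
    refine ⟨⟨⟨?_, ?_, ?_⟩⟩⟩
    · exact ⟨fun b => u.toFun b, fun {a b} _ => PUnit.unit,
        fun _ _ => continuous_const, fun _ _ => rfl⟩
    · refine FlowHom.hext (funext fun b => rfl) (fun α β q => ?_)
      exact heq_of_eq rfl
    · exact Subsingleton.elim _ _
  · subst hA; subst hB
    have hf' : i = Cmap := eq_of_heq hf
    subst hf'
    constructor
    intro u v sq
    refine ⟨⟨⟨?_, ?_, ?_⟩⟩⟩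
    · exact ⟨fun _ => Classical.arbitrary S, fun q => q.elim,
        fun _ _ => @continuous_of_isEmpty _ _ (DFlow.str _ _ _) (DFlow.str _ _ _) (inferInstanceAs (IsEmpty Empty)) _, fun x _ => x.elim⟩
    · exact subsingleton_hom_of_empty_states (inferInstanceAs (IsEmpty Empty)) _ _
    · exact Subsingleton.elim _ _

/-! ### `c_n` and `c₀⁺` are trivial cofibrations -/

lemma cFlow_mem_cofClass (n : ℕ) : cofClass IglC (cFlow n) :=
  mem_cofClass_of_mem (Or.inl ⟨n, rfl, rfl, HEq.rfl⟩)

lemma cFlow_mem_WbarDK {n : ℕ} (hn : 1 ≤ n) : WbarDK (cFlow n) := by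
  refine Or.inr (Or.inr ⟨⟨false, true, ?_⟩, ⟨false, true, ?_⟩⟩)
  · obtain ⟨z⟩ := gSphere_nonempty hn
    exact ⟨(z : GlobPath (gSphere n) false true)⟩
  · obtain ⟨z⟩ := gDisk_nonempty n
    exact ⟨(z : GlobPath (gDisk n) false true)⟩

lemma cZeroPlus_mem_WbarDK : WbarDK cZeroPlus := by
  refine Or.inr (Or.inr ⟨⟨.inl false, .inl true, ?_⟩, ⟨.inl false, .inl true, ?_⟩⟩)
  · exact ⟨(PUnit.unit : GlobPath PUnit false true)⟩
  · exact ⟨(PUnit.unit : GlobPath PUnit false true)⟩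

lemma cZeroPlus_mem_cofClass : cofClass IglC cZeroPlus := by
  intro E D p hp
  constructor
  intro u v sq
  -- the restricted square against `cFlow 0`
  have sq0 : CommSq (sumInr Iseg (DFlow.glob (gSphere 0)) ≫ u) (cFlow 0) p
      (sumInr Iseg (DFlow.glob (gDisk 0)) ≫ v) := by
    constructor
    refine FlowHom.ext_of_setFlow (glob_isSetFlow gSphere_zero_isEmpty) (funext fun b => ?_)
    exact congrFun (FlowHom.toFun_eq sq.w) (.inr b)
  haveI hlift : HasLiftingProperty (cFlow 0) p := hp (cFlow 0) (Or.inl ⟨0, rfl, rfl, HEq.rfl⟩)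
  obtain ⟨⟨l0⟩⟩ := hlift.sq_hasLift sq0
  set L := l0.l with hL
  refine ⟨⟨⟨?_, ?_, ?_⟩⟩⟩
  · exact {
      toFun := Sum.elim (fun a => u.toFun (.inl a)) L.toFun
      map := fun {a b} x =>
        match a, b, x with
        | .inl a, .inl b, x => u.map (show (Iseg.sum (DFlow.glob (gSphere 0))).Path (.inl a) (.inl b) from x)
        | .inr _, .inr _, x => L.map x
        | .inl _, .inr _, x => x.elim
        | .inr _, .inl _, x => x.elim
      continuous_map := fun a b =>
        match a, b with
        | .inl a, .inl b => u.continuous_map (.inl a) (.inl b)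
        | .inr a, .inr b => L.continuous_map a b
        | .inl _, .inr _ => @continuous_of_isEmpty _ _ (DFlow.str _ _ _) (DFlow.str _ _ _) (inferInstanceAs (IsEmpty Empty)) _
        | .inr _, .inl _ => @continuous_of_isEmpty _ _ (DFlow.str _ _ _) (DFlow.str _ _ _) (inferInstanceAs (IsEmpty Empty)) _
      map_comp := fun {a b c} x y =>
        match a, b, c, x, y with
        | .inl a, .inl b, .inl c, x, y =>
            u.map_comp (show (Iseg.sum (DFlow.glob (gSphere 0))).Path (.inl a) (.inl b) from x)
              (show (Iseg.sum (DFlow.glob (gSphere 0))).Path (.inl b) (.inl c) from y)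
        | .inr _, .inr _, .inr _, x, y => L.map_comp x y
        | .inl _, .inl _, .inr _, _, y => y.elim
        | .inl _, .inr _, _, x, _ => x.elim
        | .inr _, .inl _, _, x, _ => x.elim
        | .inr _, .inr _, .inl _, _, y => y.elim }
  · refine FlowHom.hext (funext fun s => ?_) (fun α β q => ?_)
    · match s with
      | .inl a => rfl
      | .inr b => exact congrFun (FlowHom.toFun_eq l0.fac_left) b
    · match α, β, q with
      | .inl _, .inl _, q => exact HEq.rfl
      | .inr a, .inr b, q => exact ((glob_isSetFlow gSphere_zero_isEmpty a b).false q).elim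
      | .inl _, .inr _, q => exact q.elim
      | .inr _, .inl _, q => exact q.elim
  · refine FlowHom.hext (funext fun s => ?_) (fun α β q => ?_)
    · match s with
      | .inl a => exact congrFun (FlowHom.toFun_eq sq.w) (.inl a)
      | .inr b => exact congrFun (FlowHom.toFun_eq l0.fac_right) b
    · match α, β, q with
      | .inl a, .inl b, q => exact FlowHom.heq_map sq.w (show (Iseg.sum (DFlow.glob (gSphere 0))).Path (.inl a) (.inl b) from q)
      | .inr a, .inr b, q => exact FlowHom.heq_map l0.fac_right q
      | .inl _, .inr _, q => exact q.elim
      | .inr _, .inl _, q => exact q.elim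

/-! ### Fibrancy characterization -/

lemma not_isSetFlow_iff (X : DFlow) :
    ¬ X.IsSetFlow ↔ ∃ α β : X.States, Nonempty (X.Path α β) := by
  unfold DFlow.IsSetFlow
  push_neg
  simp [not_isEmpty_iff]

lemma fibrant_char_forward (X : DFlow)
    (hlift : ∀ {A B : DFlow} (i : A ⟶ B), cofClass IglC i → WbarDK i →
      HasLiftingProperty i X.toTerminal)
    (hX : ¬ X.IsSetFlow) : ∀ α β : X.States, TrivFibOverPoint (X.Path α β) := by
  obtain ⟨α₀, β₀, ⟨e₀⟩⟩ := (not_isSetFlow_iff X).mp hX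
  intro α β
  constructor
  · -- nonemptiness, via `c₀⁺`
    have hl1 := hlift cZeroPlus cZeroPlus_mem_cofClass cZeroPlus_mem_WbarDK
    let u : Iseg.sum (DFlow.glob (gSphere 0)) ⟶ X :=
      sumHomMk (globHomMk α₀ β₀ (fun _ => e₀) continuous_const)
        (globHomMk α β (fun z => (gSphere_zero_isEmpty.false z).elim)
          (continuous_of_isEmpty gSphere_zero_isEmpty _))
    have sq : CommSq u cZeroPlus X.toTerminal (Iseg.sum (DFlow.glob (gDisk 0))).toTerminal :=
      ⟨Subsingleton.elim _ _⟩
    obtain ⟨⟨l⟩⟩ := hl1.sq_hasLift sq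
    obtain ⟨d₀⟩ := gDisk_nonempty 0
    have q := l.l.map (show (Iseg.sum (DFlow.glob (gDisk 0))).Path (.inr false) (.inr true)
      from d₀)
    have h0 : l.l.toFun (.inr false) = α := congrFun (FlowHom.toFun_eq l.fac_left) (.inr false)
    have h1 : l.l.toFun (.inr true) = β := congrFun (FlowHom.toFun_eq l.fac_left) (.inr true)
    exact ⟨cast (by rw [h0, h1]) q⟩
  · -- extension property, via `c_n`
    intro n hn g
    have hl2 := hlift (cFlow n) (cFlow_mem_cofClass n) (cFlow_mem_WbarDK hn)
    let u : DFlow.glob (gSphere n) ⟶ X := globHomMk α β (fun z => g z) g.continuous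
    have sq : CommSq u (cFlow n) X.toTerminal (DFlow.glob (gDisk n)).toTerminal :=
      ⟨Subsingleton.elim _ _⟩
    obtain ⟨⟨l⟩⟩ := hl2.sq_hasLift sq
    have h0 : l.l.toFun false = α := congrFun (FlowHom.toFun_eq l.fac_left) false
    have h1 : l.l.toFun true = β := congrFun (FlowHom.toFun_eq l.fac_left) true
    refine ⟨⟨fun d => cast (by rw [h0, h1])
      (l.l.map (show (DFlow.glob (gDisk n)).Path false true from d)), ?_⟩, ?_⟩
    · exact (continuous_path_cast X h0 h1).comp (l.l.continuous_map false true)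
    · intro z
      exact cast_eq_iff_heq.mpr
        (FlowHom.heq_map l.fac_left (show (DFlow.glob (gSphere n)).Path false true from z))

lemma rlp_toTerminal_of_trivFib (X : DFlow) (hne : Nonempty X.States)
    (h : ∀ α β : X.States, TrivFibOverPoint (X.Path α β)) : rlpClass IglC X.toTerminal := by
  intro A B i hi
  rcases hi with ⟨n, hA, hB, hf⟩ | ⟨hA, hB, hf⟩
  · subst hA; subst hB
    have hf' : i = cFlow n := eq_of_heq hf
    subst hf'
    constructor
    intro u v sq
    set α := u.toFun false
    set β := u.toFun true
    obtain ⟨G, hGc, hGext⟩ : ∃ G : gDisk n → X.Path α β, Continuous G ∧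
        ∀ z : gSphere n, G (sphereIncl n z) = u.map (show (DFlow.glob (gSphere n)).Path
          false true from z) := by
      rcases Nat.eq_zero_or_pos n with h0 | hpos
      · subst h0
        exact ⟨fun _ => (h α β).1.some, continuous_const, fun z => isEmptyElim z⟩
      · obtain ⟨G, hG⟩ := (h α β).2 n hpos
          ⟨fun z => u.map (show (DFlow.glob (gSphere n)).Path false true from z),
            u.continuous_map false true⟩
        exact ⟨G, G.continuous, hG⟩
    refine ⟨⟨⟨globHomMk α β G hGc, ?_, Subsingleton.elim _ _⟩⟩⟩
    refine FlowHom.hext (funext fun b => ?_) (fun a b q => ?_)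
    · match b with
      | false => rfl
      | true => rfl
    · match a, b, q with
      | false, true, q => exact heq_of_eq (hGext q)
      | false, false, q => exact q.elim
      | true, false, q => exact q.elim
      | true, true, q => exact q.elim
  · subst hA; subst hB
    have hf' : i = Cmap := eq_of_heq hf
    subst hf'
    constructor
    intro u v sq
    refine ⟨⟨⟨⟨fun _ => hne.some, fun q => q.elim,
      fun _ _ => @continuous_of_isEmpty _ _ (DFlow.str _ _ _) (DFlow.str _ _ _) (inferInstanceAs (IsEmpty Empty)) _, fun x _ => x.elim⟩,
      ?_, Subsingleton.elim _ _⟩⟩⟩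
    exact subsingleton_hom_of_empty_states (inferInstanceAs (IsEmpty Empty)) _ _

lemma fibrant_char_backward (X : DFlow)
    (hX : X.IsSetFlow ∨ ∀ α β : X.States, TrivFibOverPoint (X.Path α β))
    {A B : DFlow} (i : A ⟶ B) (hcof : cofClass IglC i) (hw : WbarDK i) :
    HasLiftingProperty i X.toTerminal := by
  by_cases hset : X.IsSetFlow
  · rcases hw with ⟨hA, hB⟩ | ⟨hA1, hB1, hAs, hBs⟩ | ⟨hA, hB⟩
    · -- both empty
      constructor
      intro u v sq
      refine ⟨⟨⟨⟨fun b => (hB.false b).elim, fun {a} _ q => (hB.false a).elim,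
        fun a _ => (hB.false a).elim, fun {a} _ _ _ _ => (hB.false a).elim⟩,
        subsingleton_hom_of_empty_states hA _ _, Subsingleton.elim _ _⟩⟩⟩
    · -- both nonempty set flows
      constructor
      intro u v sq
      -- coherence via the codiscrete flow on `X.States`
      have hXne : Nonempty X.States := ⟨u.toFun hA1.some⟩
      haveI hlift2 : HasLiftingProperty i (codisc X.States).toTerminal :=
        hcof (codisc X.States).toTerminal (codisc_toTerminal_rlp hXne)
      have sq' : CommSq (⟨u.toFun, fun _ => PUnit.unit, fun _ _ => @continuous_const _ _ (A.str _ _) ((codisc X.States).str _ _) PUnit.unit,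
          fun _ _ => rfl⟩ : A ⟶ codisc X.States) i (codisc X.States).toTerminal B.toTerminal :=
        ⟨Subsingleton.elim _ _⟩
      obtain ⟨⟨l'⟩⟩ := hlift2.sq_hasLift sq'
      have hcoh : ∀ a a' : A.States, i.toFun a = i.toFun a' → u.toFun a = u.toFun a' := by
        intro a a' haa
        have h1 := congrFun (FlowHom.toFun_eq l'.fac_left) a
        have h2 := congrFun (FlowHom.toFun_eq l'.fac_left) a'
        simp only [FlowHom.comp_toFun, Function.comp] at h1 h2
        rw [← h1, ← h2, haa]
      classical
      refine ⟨⟨⟨⟨fun b => if hb : ∃ a, i.toFun a = b then u.toFun hb.choose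
          else u.toFun hA1.some,
        fun {a b} q => ((hBs a b).false q).elim,
        fun a b => continuous_of_isEmpty (hBs a b) _,
        fun {a b c} x _ => ((hBs a b).false x).elim⟩, ?_, Subsingleton.elim _ _⟩⟩⟩
      refine FlowHom.ext_of_setFlow hAs (funext fun a => ?_)
      have hb : ∃ a', i.toFun a' = i.toFun a := ⟨a, rfl⟩
      simp only [FlowHom.comp_toFun, Function.comp, dif_pos hb]
      exact hcoh _ _ hb.choose_spec
    · -- both have execution paths, but `X` is a set flow: no square exists
      obtain ⟨a, b, ⟨q⟩⟩ := hA
      constructor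
      intro u v sq
      exact ((hset _ _).false (u.map q)).elim
  · have htf : ∀ α β : X.States, TrivFibOverPoint (X.Path α β) := hX.resolve_left hset
    obtain ⟨α, _, ⟨_⟩⟩ := (not_isSetFlow_iff X).mp hset
    exact hcof X.toTerminal (rlp_toTerminal_of_trivFib X ⟨α⟩ htf)

/-! ### Part (iii): q-cofibrant = cofibrant -/

section PartIII

variable (X E D : DFlow) (p : E ⟶ D) (g : X ⟶ D) (s : X.States → E.States)
  (hs : ∀ x, p.toFun (s x) = g.toFun x)

/-- Path spaces of the "pullback along a chosen section of states" flow. -/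
def WPath (x y : X.States) : Type :=
  {q : X.Path x y × E.Path (s x) (s y) // HEq (p.map q.2) (g.map q.1)}

instance (x y : X.States) : TopologicalSpace (WPath X E D p g s x y) :=
  inferInstanceAs (TopologicalSpace {q : X.Path x y × E.Path (s x) (s y) // _})

/-- The comparison flow used to produce sections. -/
def Wflow : DFlow where
  States := X.States
  Path := WPath X E D p g s
  str x y := inferInstance
  comp {x y z} q r := ⟨(X.comp q.1.1 r.1.1, E.comp q.1.2 r.1.2), by
    rw [p.map_comp, g.map_comp]
    exact heq_comp_congr D (hs x) (hs y) (hs z) q.2 r.2⟩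
  continuous_comp x y z := by
    apply Continuous.subtype_mk
    refine Continuous.prodMk ?_ ?_
    · exact (X.continuous_comp x y z).comp
        ((continuous_fst.comp (continuous_subtype_val.comp continuous_fst)).prodMk
          (continuous_fst.comp (continuous_subtype_val.comp continuous_snd)))
    · exact (E.continuous_comp _ _ _).comp
        ((continuous_snd.comp (continuous_subtype_val.comp continuous_fst)).prodMk
          (continuous_snd.comp (continuous_subtype_val.comp continuous_snd)))
  assoc {x y z w} q r t := Subtype.ext (Prod.ext (X.assoc _ _ _) (E.assoc _ _ _))

/-- Projection to `X`; injective on states. -/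
def Wproj : Wflow X E D p g s hs ⟶ X where
  toFun := id
  map q := q.1.1
  continuous_map _ _ := @Continuous.comp _ _ _ (DFlow.str _ _ _) (@instTopologicalSpaceProd _ _ (DFlow.str _ _ _) (DFlow.str _ _ _)) (DFlow.str _ _ _) _ _ (@continuous_fst _ _ (DFlow.str _ _ _) (DFlow.str _ _ _)) (@continuous_subtype_val _ (@instTopologicalSpaceProd _ _ (DFlow.str _ _ _) (DFlow.str _ _ _)) _)
  map_comp _ _ := rfl

/-- Projection to `E`. -/
def Wsnd : Wflow X E D p g s hs ⟶ E where
  toFun := s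
  map q := q.1.2
  continuous_map _ _ := @Continuous.comp _ _ _ (DFlow.str _ _ _) (@instTopologicalSpaceProd _ _ (DFlow.str _ _ _) (DFlow.str _ _ _)) (DFlow.str _ _ _) _ _ (@continuous_snd _ _ (DFlow.str _ _ _) (DFlow.str _ _ _)) (@continuous_subtype_val _ (@instTopologicalSpaceProd _ _ (DFlow.str _ _ _) (DFlow.str _ _ _)) _)
  map_comp _ _ := rfl

lemma Wsq : Wproj X E D p g s hs ≫ g = Wsnd X E D p g s hs ≫ p :=
  FlowHom.hext (funext fun x => (hs x).symm) (fun x y q => q.2.symm)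

lemma WPath_hcongr {x y x' y' : X.States} (hx : x = x') (hy : y = y')
    {q : WPath X E D p g s x y} {q' : WPath X E D p g s x' y'}
    (h1 : HEq q.1.1 q'.1.1) (h2 : HEq q.1.2 q'.1.2) : HEq q q' := by
  subst hx; subst hy
  exact heq_of_eq (Subtype.ext (Prod.ext (eq_of_heq h1) (eq_of_heq h2)))

/-- The projection `Wflow ⟶ X` is in `rlp(I^gl ∪ {C, R})`. -/
lemma Wproj_rlp (hp : rlpClass IglC p) : rlpClass IglCR (Wproj X E D p g s hs) := by
  intro A B i hi
  rcases hi with ⟨n, hA, hB, hf⟩ | ⟨hA, hB, hf⟩ | ⟨hA, hB, hf⟩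
  · -- `c_n`
    subst hA; subst hB
    have hf' : i = cFlow n := eq_of_heq hf
    subst hf'
    constructor
    intro u v sq
    have sq' : CommSq (u ≫ Wsnd X E D p g s hs) (cFlow n) p (v ≫ g) := by
      constructor
      rw [Category.assoc, ← Wsq X E D p g s hs, ← Category.assoc, sq.w, Category.assoc]
    haveI hlift : HasLiftingProperty (cFlow n) p := hp (cFlow n) (Or.inl ⟨n, rfl, rfl, HEq.rfl⟩)
    obtain ⟨⟨l0⟩⟩ := hlift.sq_hasLift sq'
    set L := l0.l with hLdef
    have hstate : ∀ b, u.toFun b = v.toFun b := fun b => congrFun (FlowHom.toFun_eq sq.w) b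
    have hL : ∀ b, L.toFun b = s (v.toFun b) := by
      intro b
      have h1 := congrFun (FlowHom.toFun_eq l0.fac_left) b
      exact h1.trans (congrArg s (hstate b))
    refine ⟨⟨⟨?_, ?_, ?_⟩⟩⟩
    · exact {
        toFun := v.toFun
        map := fun {a b} d =>
          match a, b, d with
          | false, true, d =>
            ⟨(v.map d, cast (by rw [hL false, hL true]) (L.map d)), by
              refine HEq.trans (heq_fmap_congr p (hL false).symm (hL true).symm
                (cast_heq _ _)) ?_
              exact FlowHom.heq_map l0.fac_right d⟩
          | false, false, d => d.elim
          | true, false, d => d.elim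
          | true, true, d => d.elim
        continuous_map := fun a b =>
          match a, b with
          | false, true => by
            letI : TopologicalSpace ((DFlow.glob (gDisk n)).Path false true) :=
              DFlow.str (DFlow.glob (gDisk n)) false true
            exact Continuous.subtype_mk
              ((v.continuous_map false true).prodMk
                ((continuous_path_cast E (hL false) (hL true)).comp
                  (L.continuous_map false true))) _
          | false, false => @continuous_of_isEmpty _ _ (DFlow.str _ _ _) (DFlow.str _ _ _) (inferInstanceAs (IsEmpty Empty)) _
          | true, false => @continuous_of_isEmpty _ _ (DFlow.str _ _ _) (DFlow.str _ _ _) (inferInstanceAs (IsEmpty Empty)) _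
          | true, true => @continuous_of_isEmpty _ _ (DFlow.str _ _ _) (DFlow.str _ _ _) (inferInstanceAs (IsEmpty Empty)) _
        map_comp := fun {a b c} x y =>
          match a, b, c, x, y with
          | false, false, _, x, _ => x.elim
          | false, true, false, _, y => y.elim
          | false, true, true, _, y => y.elim
          | true, _, _, x, _ => x.elim }
    · refine FlowHom.hext (funext fun b => (hstate b).symm) (fun a b q => ?_)
      match a, b, q with
      | false, true, q =>
        refine WPath_hcongr X E D p g s (hstate false).symm (hstate true).symm ?_ ?_
        · exact (FlowHom.heq_map sq.w q).symm
        · exact (cast_heq _ _).trans (FlowHom.heq_map l0.fac_left q)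
      | false, false, q => exact q.elim
      | true, false, q => exact q.elim
      | true, true, q => exact q.elim
    · refine FlowHom.hext (funext fun b => rfl) (fun a b q => ?_)
      match a, b, q with
      | false, true, q => exact HEq.rfl
      | false, false, q => exact q.elim
      | true, false, q => exact q.elim
      | true, true, q => exact q.elim
  · -- `C`
    subst hA; subst hB
    have hf' : i = Cmap := eq_of_heq hf
    subst hf'
    constructor
    intro u v sq
    refine ⟨⟨⟨⟨fun _ => v.toFun PUnit.unit, fun q => q.elim,
      fun _ _ => @continuous_of_isEmpty _ _ (DFlow.str _ _ _) (DFlow.str _ _ _) (inferInstanceAs (IsEmpty Empty)) _, fun x _ => x.elim⟩,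
      subsingleton_hom_of_empty_states (inferInstanceAs (IsEmpty Empty)) _ _, ?_⟩⟩⟩
    exact FlowHom.ext_of_setFlow (fun _ _ => inferInstanceAs (IsEmpty Empty))
      (funext fun _ => rfl)
  · -- `R`
    subst hA; subst hB
    have hf' : i = Rmap := eq_of_heq hf
    subst hf'
    constructor
    intro u v sq
    have hsq : ∀ b : Bool, u.toFun b = v.toFun PUnit.unit := fun b =>
      congrFun (FlowHom.toFun_eq sq.w) b
    refine ⟨⟨⟨⟨fun _ => u.toFun false, fun q => q.elim,
      fun _ _ => @continuous_of_isEmpty _ _ (DFlow.str _ _ _) (DFlow.str _ _ _) (inferInstanceAs (IsEmpty Empty)) _, fun x _ => x.elim⟩,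
      ?_, ?_⟩⟩⟩
    · refine FlowHom.ext_of_setFlow (fun _ _ => inferInstanceAs (IsEmpty Empty))
        (funext fun b => ?_)
      match b with
      | false => rfl
      | true => exact ((hsq false).trans (hsq true).symm)
    · exact FlowHom.ext_of_setFlow (fun _ _ => inferInstanceAs (IsEmpty Empty))
        (funext fun _ => (hsq false))

end PartIII

lemma cofClass_IglCR_fromEmpty (X : DFlow) (h : cofClass IglCR X.fromEmpty) :
    cofClass IglC X.fromEmpty := by
  intro E D p hp
  constructor
  intro f g sq
  choose s hs using fun x => surj_states_of_rlp hp (g.toFun x)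
  haveI hlift : HasLiftingProperty X.fromEmpty (Wproj X E D p g s hs) :=
    h (Wproj X E D p g s hs) (Wproj_rlp X E D p g s hs hp)
  have sq' : CommSq (Wflow X E D p g s hs).fromEmpty X.fromEmpty (Wproj X E D p g s hs)
      (𝟙 X) := ⟨subsingleton_hom_of_empty_states (inferInstanceAs (IsEmpty Empty)) _ _⟩
  obtain ⟨⟨σ⟩⟩ := hlift.sq_hasLift sq'
  refine ⟨⟨⟨σ.l ≫ Wsnd X E D p g s hs, ?_, ?_⟩⟩⟩
  · exact subsingleton_hom_of_empty_states (inferInstanceAs (IsEmpty Empty)) _ _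
  · rw [Category.assoc, ← Wsq X E D p g s hs, ← Category.assoc, σ.fac_right, Category.id_comp]
/-- in the model structure on `Flow` with cofibrations
`cof(I^gl ∪ {C})` and weak equivalences `W̄_DK`, a flow `X` is fibrant if and only if
either `ℙX = ∅`, or all the spaces `ℙ_{α,β}X` are nonempty with vanishing homotopy
(trivially fibrant over the point); in particular not all flows are fibrant. Moreover,
the cofibrant objects are exactly the q-cofibrant flows, those `X` with
`∅ → X ∈ cof(I^gl ∪ {C, R})`. -/
theorem fibrant_and_cofibrant_characterization
    (MS : ModelStructure DFlow) (hC : MS.C = cofClass IglC) (hW : MS.W = WbarDK) :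
    (∀ X : DFlow,
      MS.F X.toTerminal ↔
        (X.IsSetFlow ∨ ∀ α β : X.States, TrivFibOverPoint (X.Path α β))) ∧
    (∃ X : DFlow, ¬ MS.F X.toTerminal) ∧
    (∀ X : DFlow, MS.C X.fromEmpty ↔ cofClass IglCR X.fromEmpty) := by
  have part1 : ∀ X : DFlow,
      MS.F X.toTerminal ↔ (X.IsSetFlow ∨ ∀ α β : X.States, TrivFibOverPoint (X.Path α β)) := by
    intro X
    constructor
    · intro hF
      have hF' : rlpClass (fun _ _ i => MS.C i ∧ MS.W i) X.toTerminal := by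
        rw [← MS.fib_eq]; exact hF
      by_cases hset : X.IsSetFlow
      · exact Or.inl hset
      · refine Or.inr (fibrant_char_forward X ?_ hset)
        intro A B i hc hw
        exact hF' i ⟨by rw [hC]; exact hc, by rw [hW]; exact hw⟩
    · intro hX
      rw [MS.fib_eq]
      intro A B i hi
      refine fibrant_char_backward X hX i ?_ ?_
      · rw [← hC]; exact hi.1
      · rw [← hW]; exact hi.2
  refine ⟨part1, ⟨Iseg, ?_⟩, ?_⟩
  · intro hF
    rcases (part1 Iseg).mp hF with hset | htf
    · exact (hset false true).false (show Iseg.Path false true from PUnit.unit)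
    · obtain ⟨e⟩ := (htf false false).1
      exact (show Empty from e).elim
  · intro X
    constructor
    · intro h
      rw [hC] at h
      exact cofClass_mono (fun f hf => hf.imp id Or.inl) h
    · intro h
      rw [hC]
      exact cofClass_IglCR_fromEmpty X h
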